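/- Let K be a simplicial complex on vertex set [m] and let ω₁,...,ω_l be minimal non-faces of K (subsets not in K all of whose proper subsets are in K) with ω₁ ∪ ... ∪ ω_l = [m]. Then m − s(K) ≤ Σᵢ (|ωᵢ| − 1), where s(K) is the maximal s such that there is a map from [m] to Z^{m−s} sending the vertices of each maximal simplex to a set of vectors extending to a basis of Z^{m−s}. -/

import Mathlib

def IsPartOfBasis (R : Type) [Semiring R] {M : Type} [AddCommMonoid M] [Module R M]
    {ι : Type} (v : ι → M) : Prop :=
  ∃ (κ : Type) (b : Module.Basis (ι ⊕ κ) R M), ∀ i, b (Sum.inl i) = v i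

lemma isPartOfBasis_comp {R : Type} [Semiring R] {M : Type} [AddCommMonoid M] [Module R M]
    {ι β : Type} (b : Module.Basis β R M) (f : ι → β) (hf : Function.Injective f) :
    IsPartOfBasis R (fun i => b (f i)) := by
  classical
  refine ⟨↥(Set.range f)ᶜ,
    b.reindex (((Equiv.ofInjective f hf).sumCongr (Equiv.refl _)).trans
      (Equiv.Set.sumCompl (Set.range f))).symm, fun i => ?_⟩
  simp [Module.Basis.reindex_apply]

lemma isPartOfBasis_map {R : Type} [Semiring R] {M N : Type} [AddCommMonoid M] [Module R M]
    [AddCommMonoid N] [Module R N] {ι : Type} {v : ι → M} (e : M ≃ₗ[R] N)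
    (h : IsPartOfBasis R v) : IsPartOfBasis R (fun i => e (v i)) := by
  obtain ⟨κ, b, hb⟩ := h
  exact ⟨κ, b.map e, fun i => by simp [hb]⟩

variable {ι : Type} (d k : ι → ℕ)

def blockFwd (x : (Σ i, Fin (d i)) → ℤ) : (Σ i, Fin (d i)) → ℤ :=
  fun p => if h : k p.1 < d p.1 then
    (if (p.2 : ℕ) = k p.1 then x p else x p + x ⟨p.1, ⟨k p.1, h⟩⟩) else x p

def blockBwd (x : (Σ i, Fin (d i)) → ℤ) : (Σ i, Fin (d i)) → ℤ :=
  fun p => if h : k p.1 < d p.1 then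
    (if (p.2 : ℕ) = k p.1 then x p else x p - x ⟨p.1, ⟨k p.1, h⟩⟩) else x p

def blockEquiv : ((Σ i, Fin (d i)) → ℤ) ≃ₗ[ℤ] ((Σ i, Fin (d i)) → ℤ) where
  toFun := blockFwd d k
  invFun := blockBwd d k
  map_add' x y := by funext p; simp only [blockFwd, Pi.add_apply]; split_ifs <;> ring
  map_smul' c x := by funext p; simp only [blockFwd, Pi.smul_apply, smul_eq_mul,
    RingHom.id_apply]; split_ifs <;> ring
  left_inv x := by
    funext p
    simp only [blockFwd, blockBwd]
    split_ifs <;> simp_all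
  right_inv x := by
    funext p
    simp only [blockFwd, blockBwd]
    split_ifs <;> simp_all

variable [DecidableEq ι]

lemma single_eval (q : Σ i, Fin (d i)) (i : ι) (j : Fin (d i)) :
    (Pi.single q (1:ℤ) : (Σ i, Fin (d i)) → ℤ) ⟨i, j⟩
      = if i = q.1 ∧ (j : ℕ) = (q.2 : ℕ) then 1 else 0 := by
  rcases q with ⟨i₀, j₀⟩
  rw [Pi.single_apply]
  by_cases hi : i = i₀
  · subst hi
    simp [Sigma.mk.inj_iff, Fin.ext_iff]
  · simp [Sigma.mk.inj_iff, hi]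

lemma blockFwd_single_A (q : Σ i, Fin (d i)) (hq : (q.2 : ℕ) ≠ k q.1)
    (p : Σ i, Fin (d i)) :
    blockFwd d k (Pi.single q 1) p
      = if p.1 = q.1 ∧ (p.2 : ℕ) = (q.2 : ℕ) then 1 else 0 := by
  rcases p with ⟨i, j⟩
  rcases q with ⟨i₀, j₀⟩
  simp only at hq
  by_cases hi : i = i₀
  · subst hi
    simp only [blockFwd, single_eval]
    split_ifs <;> simp_all
  · simp only [blockFwd, single_eval]
    split_ifs <;> simp_all

lemma blockFwd_single_B (q : Σ i, Fin (d i)) (hq : (q.2 : ℕ) = k q.1)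
    (p : Σ i, Fin (d i)) :
    blockFwd d k (Pi.single q 1) p = if p.1 = q.1 then 1 else 0 := by
  rcases p with ⟨i, j⟩
  rcases q with ⟨i₀, j₀⟩
  have hk : k i₀ < d i₀ := hq ▸ j₀.isLt
  simp only at hq
  by_cases hi : i = i₀
  · subst hi
    simp only [blockFwd, single_eval]
    split_ifs <;> simp_all
  · simp only [blockFwd, single_eval]
    split_ifs <;> simp_all

section Main

variable {m l : ℕ} (ω : Fin l → Finset (Fin m))

def rk (i : Fin l) (v : Fin m) : ℕ := ((ω i).filter (fun x => x < v)).card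

lemma rk_lt {i : Fin l} {v : Fin m} (hv : v ∈ ω i) : rk ω i v < (ω i).card := by
  apply Finset.card_lt_card
  refine ⟨Finset.filter_subset _ _, fun hsub => ?_⟩
  have := hsub hv
  simp at this

lemma rk_le {i : Fin l} {v : Fin m} (hv : v ∈ ω i) : rk ω i v ≤ (ω i).card - 1 :=
  Nat.le_sub_one_of_lt (rk_lt ω hv)

lemma rk_strictMono {i : Fin l} {v v' : Fin m} (hv : v ∈ ω i) (hlt : v < v') :
    rk ω i v < rk ω i v' := by
  apply Finset.card_lt_card
  rw [Finset.ssubset_iff_of_subset]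
  · exact ⟨v, Finset.mem_filter.2 ⟨hv, hlt⟩, by simp⟩
  · intro x hx
    rcases Finset.mem_filter.1 hx with ⟨h1, h2⟩
    exact Finset.mem_filter.2 ⟨h1, lt_trans h2 hlt⟩

lemma rk_inj {i : Fin l} {v v' : Fin m} (hv : v ∈ ω i) (hv' : v' ∈ ω i)
    (h : rk ω i v = rk ω i v') : v = v' := by
  rcases lt_trichotomy v v' with hlt | heq | hlt
  · exact absurd h (Nat.ne_of_lt (rk_strictMono ω hv hlt))
  · exact heq
  · exact absurd h.symm (Nat.ne_of_lt (rk_strictMono ω hv' hlt))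

end Main

theorem buchstaber_bound_from_minimal_nonfaces (m l : ℕ)
    (K : Finset (Finset (Fin m)))
    (hdown : ∀ S ∈ K, ∀ T ⊆ S, T ∈ K)
    (ω : Fin l → Finset (Fin m))
    (hmin : ∀ i, ω i ∉ K ∧ ∀ T ⊂ ω i, T ∈ K)
    (hcover : Finset.univ.biUnion ω = Finset.univ) :
    m - sSup {s : ℕ | s ≤ m ∧ ∃ lam : Fin m → (Fin (m - s) → ℤ),
        ∀ F ∈ K, (∀ G ∈ K, F ⊆ G → F = G) →
          IsPartOfBasis ℤ (fun i : {x // x ∈ F} => lam i.1)} ≤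
      ∑ i : Fin l, ((ω i).card - 1) := by
  classical
  set T := ∑ i : Fin l, ((ω i).card - 1) with hT
  rcases le_or_gt m T with hmT | hTm
  · exact le_trans (Nat.sub_le _ _) hmT
  have hms₀ : m - (m - T) = T := Nat.sub_sub_self hTm.le
  set s₀ := m - T with hs₀
  let d : Fin l → ℕ := fun i => (ω i).card - 1
  have hcard : Fintype.card (Σ i : Fin l, Fin (d i)) = m - s₀ := by
    simp [Fintype.card_sigma, hms₀, d, hT]
  let eqv : Fin (m - s₀) ≃ (Σ i : Fin l, Fin (d i)) :=
    Fintype.equivOfCardEq (by simp [hcard])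
  have hex : ∀ v : Fin m, ∃ i, v ∈ ω i := by
    intro v
    have hv : v ∈ Finset.univ.biUnion ω := by rw [hcover]; exact Finset.mem_univ v
    rcases Finset.mem_biUnion.1 hv with ⟨i, _, hi⟩
    exact ⟨i, hi⟩
  choose σ hσ using hex
  let w : ∀ i : Fin l, Fin m → Fin (d i) → ℤ := fun i v j =>
    if rk ω i v < d i then (if (j : ℕ) = rk ω i v then 1 else 0) else 1
  let lam' : Fin m → (Σ i : Fin l, Fin (d i)) → ℤ := fun v p =>
    if p.1 = σ v then w p.1 v p.2 else 0
  refine le_trans (Nat.sub_le_sub_left (le_csSup ⟨m, fun x hx => hx.1⟩ ?_) m)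
    (le_of_eq hms₀)
  refine ⟨Nat.sub_le _ _, fun v t => lam' v (eqv t), ?_⟩
  intro F hF _
  have hnot : ∀ i, ∃ x, x ∈ ω i ∧ x ∉ F := by
    intro i
    by_contra h
    push_neg at h
    exact (hmin i).1 (hdown F hF _ (fun x hx => h x hx))
  choose u hu huF using hnot
  let k : Fin l → ℕ := fun i => rk ω i (u i)
  have hkd : ∀ (v : Fin m), v ∈ F → ¬ rk ω (σ v) v < d (σ v) → k (σ v) < d (σ v) := by
    intro v hvF hnlt
    have h1 : rk ω (σ v) v = d (σ v) := le_antisymm (rk_le ω (hσ v)) (not_lt.1 hnlt)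
    have h2 : k (σ v) ≤ d (σ v) := rk_le ω (hu _)
    rcases lt_or_eq_of_le h2 with h | h
    · exact h
    · exfalso
      have heq := rk_inj ω (hu (σ v)) (hσ v) (h.trans h1.symm)
      have : u (σ v) ∈ F := by rw [heq]; exact hvF
      exact huF (σ v) this
  let f : {x // x ∈ F} → Σ i : Fin l, Fin (d i) := fun v =>
    ⟨σ v.1, if h : rk ω (σ v.1) v.1 < d (σ v.1) then ⟨rk ω (σ v.1) v.1, h⟩
      else ⟨k (σ v.1), hkd v.1 v.2 h⟩⟩
  have hval : ∀ v : {x // x ∈ F}, ((f v).2 : ℕ) =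
      if rk ω (σ v.1) v.1 < d (σ v.1) then rk ω (σ v.1) v.1 else k (σ v.1) := by
    intro v
    by_cases h : rk ω (σ v.1) v.1 < d (σ v.1)
    · simp only [f]; rw [dif_pos h, if_pos h]
    · simp only [f]; rw [dif_neg h, if_neg h]
  have huv : ∀ v : {x // x ∈ F}, ∀ i, rk ω i v.1 ≠ k i ∨ ¬ v.1 ∈ ω i := by
    intro v i
    by_cases hm : v.1 ∈ ω i
    · left
      intro h
      have heq := rk_inj ω hm (hu i) h
      have : u i ∈ F := by rw [← heq]; exact v.2
      exact huF i this
    · right; exact hm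
  have hrkne : ∀ v : {x // x ∈ F}, rk ω (σ v.1) v.1 ≠ k (σ v.1) := by
    intro v
    rcases huv v (σ v.1) with h | h
    · exact h
    · exact absurd (hσ v.1) h
  have hfinj : Function.Injective f := by
    intro v v' hEq
    have h1 : σ v.1 = σ v'.1 := congrArg Sigma.fst hEq
    have h2 : ((f v).2 : ℕ) = ((f v').2 : ℕ) :=
      congrArg (fun p : Σ i, Fin (d i) => (p.2 : ℕ)) hEq
    rw [hval, hval] at h2
    have hv'ω : v'.1 ∈ ω (σ v.1) := h1 ▸ hσ v'.1
    have hrkv' : rk ω (σ v.1) v'.1 = rk ω (σ v'.1) v'.1 := congrArg (fun i => rk ω i v'.1) h1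
    have hdv' : d (σ v.1) = d (σ v'.1) := congrArg d h1
    have hkv' : k (σ v.1) = k (σ v'.1) := congrArg k h1
    by_cases hv : rk ω (σ v.1) v.1 < d (σ v.1) <;>
      by_cases hv' : rk ω (σ v'.1) v'.1 < d (σ v'.1)
    · rw [if_pos hv, if_pos hv'] at h2
      exact Subtype.ext (rk_inj ω (hσ v.1) hv'ω (h2.trans hrkv'.symm))
    · rw [if_pos hv, if_neg hv'] at h2
      exact absurd (h2.trans hkv'.symm) (hrkne v)
    · rw [if_neg hv, if_pos hv'] at h2
      exact absurd (h2.symm.trans hkv') (hrkne v')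
    · have e1 : rk ω (σ v.1) v.1 = d (σ v.1) := le_antisymm (rk_le ω (hσ v.1)) (not_lt.1 hv)
      have e2 : rk ω (σ v'.1) v'.1 = d (σ v'.1) := le_antisymm (rk_le ω (hσ v'.1)) (not_lt.1 hv')
      refine Subtype.ext (rk_inj ω (hσ v.1) hv'ω ?_)
      rw [e1, hrkv', e2, hdv']
  let b := (Pi.basisFun ℤ (Σ i : Fin l, Fin (d i))).map (blockEquiv d k)
  have hb : ∀ v : {x // x ∈ F}, b (f v) = lam' v.1 := by
    intro v
    funext p
    have hgoal : b (f v) p = blockFwd d k (Pi.single (f v) 1) p := by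
      simp only [b, Module.Basis.map_apply, Pi.basisFun_apply]
      rfl
    rw [hgoal]
    by_cases hA : rk ω (σ v.1) v.1 < d (σ v.1)
    · have hfv : f v = ⟨σ v.1, ⟨rk ω (σ v.1) v.1, hA⟩⟩ := by
        simp only [f]; rw [dif_pos hA]
      rw [hfv, blockFwd_single_A d k _ (by simpa using hrkne v)]
      rcases p with ⟨i, j⟩
      simp only [lam', w]
      by_cases hi : i = σ v.1
      · subst hi
        simp [hA]
      · simp [hi, Ne.symm hi]
    · have hk' := hkd v.1 v.2 hA
      have hfv : f v = ⟨σ v.1, ⟨k (σ v.1), hk'⟩⟩ := by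
        simp only [f]; rw [dif_neg hA]
      rw [hfv, blockFwd_single_B d k _ (by simp)]
      rcases p with ⟨i, j⟩
      simp only [lam', w]
      by_cases hi : i = σ v.1
      · subst hi
        simp [hA]
      · simp [hi, Ne.symm hi]
  have hpart : IsPartOfBasis ℤ (fun v : {x // x ∈ F} => lam' v.1) := by
    have h := isPartOfBasis_comp b f hfinj
    have heq : (fun v => b (f v)) = (fun v : {x // x ∈ F} => lam' v.1) := funext hb
    rwa [heq] at h
  exact isPartOfBasis_map (LinearEquiv.funCongrLeft ℤ ℤ eqv) hpart
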